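/- Define the commutative ring R = ℤ[a_1,…,a_n, y] / (a_i·y − a_i², i = 1,…,n). Then R is a free ℤ[y]-module with basis the square-free monomials ∏_{j∈J} a_j over subsets J ⊆ {1,…,n}. -/

import Mathlib

open MvPolynomial

/-- The ideal (aᵢ·y − aᵢ²) in ℤ[a₁,…,aₙ,y], where `some i ↦ aᵢ` and `none ↦ y`. -/
noncomputable def TWideal (n : ℕ) : Ideal (MvPolynomial (Option (Fin n)) ℤ) :=
  Ideal.span (Set.range fun i : Fin n => X (some i) * X none - X (some i) ^ 2)

/-- The ring R = ℤ[a₁,…,aₙ,y]/(aᵢ·y − aᵢ²). -/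
noncomputable abbrev TWring (n : ℕ) : Type :=
  MvPolynomial (Option (Fin n)) ℤ ⧸ TWideal n

/-- ℤ[y] acts on R via y ↦ (class of y). -/
noncomputable instance (n : ℕ) : Algebra (Polynomial ℤ) (TWring n) :=
  ((Polynomial.aeval (Ideal.Quotient.mk (TWideal n) (X none)) :
      Polynomial ℤ →ₐ[ℤ] TWring n)).toRingHom.toAlgebra

namespace TWaux

variable (n : ℕ)

/-- The square-free monomial family. -/
noncomputable def v (J : Finset (Fin n)) : TWring n :=
  Ideal.Quotient.mk (TWideal n) (∏ j ∈ J, X (some j))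

lemma smul_def (p : Polynomial ℤ) (x : TWring n) :
    p • x = Polynomial.aeval (Ideal.Quotient.mk (TWideal n) (X none)) p * x := rfl

/-- Evaluation point for a subset J. -/
noncomputable def pt (J : Finset (Fin n)) : Option (Fin n) → Polynomial ℤ :=
  fun i => i.elim Polynomial.X fun j => if j ∈ J then Polynomial.X else 0

/-- Evaluation at the point aᵢ = y for i ∈ J, aᵢ = 0 otherwise. -/
noncomputable def ev (J : Finset (Fin n)) : TWring n →ₐ[ℤ] Polynomial ℤ :=
  Ideal.Quotient.liftₐ (TWideal n) (MvPolynomial.aeval (pt n J))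
    (by
      intro a ha
      have hle : TWideal n ≤ RingHom.ker (MvPolynomial.aeval (pt n J)).toRingHom := by
        rw [TWideal, Ideal.span_le]
        rintro _ ⟨i, rfl⟩
        simp only [SetLike.mem_coe, RingHom.mem_ker, AlgHom.toRingHom_eq_coe,
          RingHom.coe_coe, map_sub, map_mul, map_pow, aeval_X]
        by_cases h : i ∈ J <;> simp [pt, h, sq]
      exact RingHom.mem_ker.mp (hle ha))

lemma ev_mk (J : Finset (Fin n)) (p : MvPolynomial (Option (Fin n)) ℤ) :
    ev n J (Ideal.Quotient.mk (TWideal n) p) = MvPolynomial.aeval (pt n J) p := rfl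

lemma ev_smul (J : Finset (Fin n)) (p : Polynomial ℤ) (x : TWring n) :
    ev n J (p • x) = p * ev n J x := by
  rw [smul_def, map_mul]
  congr 1
  rw [← Polynomial.aeval_algHom_apply, ev_mk]
  simp [pt, Polynomial.aeval_X_left_apply]

lemma ev_v (J K : Finset (Fin n)) :
    ev n J (v n K) = if K ⊆ J then Polynomial.X ^ K.card else 0 := by
  rw [v, ev_mk, map_prod]
  by_cases h : K ⊆ J
  · rw [if_pos h]
    have e : ∀ k ∈ K, (MvPolynomial.aeval (pt n J)) (X (some k) : MvPolynomial (Option (Fin n)) ℤ) = (Polynomial.X : Polynomial ℤ) := by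
      intro k hk
      simp [pt, h hk]
    rw [Finset.prod_congr rfl e, Finset.prod_const]
  · rw [if_neg h]
    obtain ⟨k, hkK, hkJ⟩ := Finset.not_subset.mp h
    exact Finset.prod_eq_zero hkK (by simp [pt, hkJ])

lemma li : LinearIndependent (Polynomial ℤ) (v n) := by
  rw [linearIndependent_iff]
  intro l hl
  have key : ∀ J : Finset (Fin n), l J = 0 := by
    intro J
    induction J using Finset.strongInduction with
    | _ J ih =>
      have h := congrArg (ev n J) hl
      rw [Finsupp.linearCombination_apply, Finsupp.sum, map_sum, map_zero] at h
      simp only [ev_smul, ev_v] at h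
      have h2 : l J * Polynomial.X ^ J.card = 0 := by
        by_cases hJ : J ∈ l.support
        · rw [Finset.sum_eq_single J (fun K hK hKJ => by
            by_cases hsub : K ⊆ J
            · rw [ih K (hsub.ssubset_of_ne hKJ), zero_mul]
            · rw [if_neg hsub, mul_zero]) (fun h => (h hJ).elim)] at h
          rwa [if_pos (subset_refl J)] at h
        · simp [Finsupp.notMem_support_iff.mp hJ]
      have hX : (Polynomial.X : Polynomial ℤ) ^ J.card ≠ 0 := pow_ne_zero _ Polynomial.X_ne_zero
      simpa [hX] using mul_eq_zero.mp h2
  exact Finsupp.ext key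

lemma mk_sq (i : Fin n) :
    Ideal.Quotient.mk (TWideal n) (X (some i) ^ 2) =
      Ideal.Quotient.mk (TWideal n) (X (some i) * X none) := by
  rw [Ideal.Quotient.eq]
  have e : (X (some i) ^ 2 - X (some i) * X none : MvPolynomial (Option (Fin n)) ℤ) =
      -(X (some i) * X none - X (some i) ^ 2) := by ring
  rw [e]
  exact neg_mem (Ideal.subset_span ⟨i, rfl⟩)

lemma mul_gen_mem (i : Option (Fin n)) (x : TWring n)
    (hx : x ∈ Submodule.span (Polynomial ℤ) (Set.range (v n))) :
    x * Ideal.Quotient.mk (TWideal n) (X i) ∈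
      Submodule.span (Polynomial ℤ) (Set.range (v n)) := by
  induction hx using Submodule.span_induction with
  | mem x hx =>
    obtain ⟨K, rfl⟩ := hx
    match i with
    | none =>
      have e : v n K * Ideal.Quotient.mk (TWideal n) (X none) =
          (Polynomial.X : Polynomial ℤ) • v n K := by
        rw [smul_def]
        simp [mul_comm]
      rw [e]
      exact Submodule.smul_mem _ _ (Submodule.subset_span ⟨K, rfl⟩)
    | some i =>
      by_cases h : i ∈ K
      · have hprod : (∏ j ∈ K, X (some j) : MvPolynomial (Option (Fin n)) ℤ) =
            X (some i) * ∏ j ∈ K.erase i, X (some j) := (Finset.mul_prod_erase K _ h).symm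
        have e : v n K * Ideal.Quotient.mk (TWideal n) (X (some i)) =
            (Polynomial.X : Polynomial ℤ) • v n K := by
          rw [smul_def, v, ← map_mul, hprod]
          have e1 : X (some i) * (∏ j ∈ K.erase i, X (some j)) * X (some i) =
              X (some i) ^ 2 * ∏ j ∈ K.erase i, (X (some j) : MvPolynomial (Option (Fin n)) ℤ) := by
            ring
          have e2 : (Polynomial.aeval (Ideal.Quotient.mk (TWideal n) (X none))
              (Polynomial.X : Polynomial ℤ)) = Ideal.Quotient.mk (TWideal n) (X none) := by
            simp
          rw [e1, e2, map_mul (Ideal.Quotient.mk (TWideal n)), mk_sq,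
            ← map_mul, ← map_mul]
          congr 1
          ring
        rw [e]
        exact Submodule.smul_mem _ _ (Submodule.subset_span ⟨K, rfl⟩)
      · have e : v n K * Ideal.Quotient.mk (TWideal n) (X (some i)) = v n (insert i K) := by
          rw [v, v, ← map_mul, Finset.prod_insert h, mul_comm]
        rw [e]
        exact Submodule.subset_span ⟨insert i K, rfl⟩
  | zero => simp
  | add x y hx hy ihx ihy => rw [add_mul]; exact add_mem ihx ihy
  | smul a x hx ihx => rw [smul_mul_assoc]; exact Submodule.smul_mem _ _ ihx

lemma mem_span (p : MvPolynomial (Option (Fin n)) ℤ) :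
    Ideal.Quotient.mk (TWideal n) p ∈ Submodule.span (Polynomial ℤ) (Set.range (v n)) := by
  induction p using MvPolynomial.induction_on with
  | C a =>
    have e : Ideal.Quotient.mk (TWideal n) (C a) = (Polynomial.C a : Polynomial ℤ) • v n ∅ := by
      rw [smul_def, v]
      simp [eq_intCast, map_intCast]
    rw [e]
    exact Submodule.smul_mem _ _ (Submodule.subset_span ⟨∅, rfl⟩)
  | add p q hp hq => rw [map_add]; exact add_mem hp hq
  | mul_X p i hp =>
    rw [map_mul]
    exact mul_gen_mem n i _ hp

lemma spans : ⊤ ≤ Submodule.span (Polynomial ℤ) (Set.range (v n)) := by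
  intro x _
  obtain ⟨p, rfl⟩ := Ideal.Quotient.mk_surjective x
  exact mem_span n p

end TWaux

theorem stmt_10 (n : ℕ) :
    ∃ b : Module.Basis (Finset (Fin n)) (Polynomial ℤ) (TWring n),
      ∀ J : Finset (Fin n),
        b J = Ideal.Quotient.mk (TWideal n) (∏ j ∈ J, X (some j)) := by
  exact ⟨Module.Basis.mk (TWaux.li n) (TWaux.spans n), fun J => Module.Basis.mk_apply _ _ J⟩
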